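/- arXiv:1702.06448 — 4 statements merged into one kernel-verified Lean document; each statement's English description precedes it below -/
import Mathlib

section
/- Let F be a field which is finitely generated over its prime field, and let E ⊆ F be a subfield which is isomorphic to F as a field. Then F is an algebraic extension of E. -/
open Polynomial
set_option maxHeartbeats 1000000
set_option synthInstance.maxHeartbeats 200000

section T
variable {L : Type*} [Field L]

theorem stmt1_aux_W0 {k k' : Type*} [CommRing k] [CommRing k'] [Algebra k L] [Algebra k' L]
    (f : k →+* k') (hinj : Function.Injective f) (hf : ∀ a, algebraMap k' L (f a) = algebraMap k L a) {x : L} :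
    IsAlgebraic k x → IsAlgebraic k' x := by
  rintro ⟨p, h0, he⟩
  refine ⟨p.map f, fun h => h0 ((Polynomial.map_eq_zero_iff hinj).1 h), ?_⟩
  rw [aeval_def, eval₂_map]
  rw [aeval_def] at he
  convert he using 2
  exact RingHom.ext hf

noncomputable def stmt1_adj (K : Subfield L) (S : Set L) : Subfield L :=
  Subfield.closure (↑K ∪ S)

theorem stmt1_le_adj (K : Subfield L) (S : Set L) : K ≤ stmt1_adj K S :=
  fun _ h => Subfield.subset_closure (Or.inl h)

theorem stmt1_subset_adj (K : Subfield L) (S : Set L) : S ⊆ ↑(stmt1_adj K S) :=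
  fun _ h => Subfield.subset_closure (Or.inr h)

-- the subfield adjoin as a Subalgebra over K
noncomputable def stmt1_SA (K : Subfield L) (S : Set L) : Subalgebra ↥K L :=
  { (stmt1_adj K S).toSubring with
    algebraMap_mem' := fun c => stmt1_le_adj K S c.2 }

theorem stmt1_mem_SA (K : Subfield L) (S : Set L) (z : L) :
    z ∈ stmt1_SA K S ↔ z ∈ stmt1_adj K S := Iff.rfl

theorem stmt1_adjoin_le (K : Subfield L) (S : Set L) :
    Algebra.adjoin ↥K S ≤ stmt1_SA K S :=
  Algebra.adjoin_le (stmt1_subset_adj K S)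

noncomputable def stmt1_incl (K : Subfield L) (S : Set L) :
    ↥(Algebra.adjoin ↥K S) →+* ↥(stmt1_adj K S) where
  toFun := fun a => ⟨a.1, stmt1_adjoin_le K S a.2⟩
  map_one' := rfl
  map_mul' := fun _ _ => rfl
  map_zero' := rfl
  map_add' := fun _ _ => rfl

theorem stmt1_bridge_a (K : Subfield L) (S : Set L) {x : L}
    (h : IsAlgebraic ↥(Algebra.adjoin ↥K S) x) : IsAlgebraic ↥(stmt1_adj K S) x := by
  refine stmt1_aux_W0 (L := L) (stmt1_incl K S) (fun a b hab => Subtype.ext (congrArg Subtype.val hab : ((stmt1_incl K S) a : L) = _)) (fun a => rfl) h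

theorem stmt1_mem_adj_iff (K : Subfield L) (S : Set L) (z : L) :
    z ∈ stmt1_adj K S ↔ z ∈ IntermediateField.adjoin ↥K S := by
  have h1 : z ∈ IntermediateField.adjoin ↥K S ↔
      z ∈ (IntermediateField.adjoin ↥K S).toSubfield := Iff.rfl
  rw [h1, IntermediateField.adjoin_toSubfield]
  have : Set.range (algebraMap ↥K L) = (K : Set L) := Subtype.range_coe
  rw [this]
  rfl

end T

section B
variable {L : Type*} [Field L]

theorem stmt1_bridge_b (K : Subfield L) (y : L) {x : L}
    (h : IsAlgebraic ↥(stmt1_adj K {y}) x) :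
    IsAlgebraic ↥(Algebra.adjoin ↥K ({y} : Set L)) x := by
  set A := Algebra.adjoin ↥K ({y} : Set L) with hA
  set Kf := stmt1_adj K {y} with hKf
  have hmem : ∀ r : Polynomial ↥K, aeval y r ∈ A := by
    intro r
    rw [hA, Algebra.adjoin_singleton_eq_range_aeval]
    exact ⟨r, rfl⟩
  letI : Algebra ↥A ↥Kf := (stmt1_incl K {y}).toAlgebra
  letI : IsScalarTower ↥A ↥Kf L := IsScalarTower.of_algebraMap_eq (fun a => rfl)
  have hinj : Function.Injective (algebraMap ↥A ↥Kf) :=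
    fun a b hab => Subtype.ext (congrArg Subtype.val hab : ((stmt1_incl K {y}) a : L) = _)
  haveI : IsFractionRing ↥A ↥Kf := by
    refine ⟨?_, ?_, ?_⟩
    · rintro ⟨u, hu⟩
      have hu0 : u ≠ 0 := nonZeroDivisors.ne_zero hu
      rw [isUnit_iff_ne_zero]
      intro h0
      exact hu0 (hinj (by rw [h0, map_zero]))
    · rintro ⟨z, hz⟩
      rw [hKf, stmt1_mem_adj_iff] at hz
      obtain ⟨r, s, hrs⟩ := (IntermediateField.mem_adjoin_simple_iff ↥K z).1 hz
      by_cases hs : aeval y s = 0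
      · refine ⟨⟨(0 : ↥A), ⟨(1 : ↥A), (nonZeroDivisors ↥A).one_mem⟩⟩, ?_⟩
        have : z = 0 := by rw [hrs, hs, div_zero]
        apply Subtype.ext
        simp [this]
      · refine ⟨⟨⟨aeval y r, hmem r⟩, ⟨⟨aeval y s, hmem s⟩,
          mem_nonZeroDivisors_of_ne_zero (fun h0 => hs (congrArg Subtype.val h0))⟩⟩, ?_⟩
        apply Subtype.ext
        show z * aeval y s = aeval y r
        rw [hrs, div_mul_cancel₀ _ hs]
    · intro a b hab
      exact ⟨⟨(1 : ↥A), (nonZeroDivisors ↥A).one_mem⟩, by rw [hinj hab]⟩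

  exact (IsFractionRing.isAlgebraic_iff ↥A ↥Kf L).2 h

end B

section Pair
variable {L : Type*} [Field L]

theorem stmt1_pair_symm {k : Type*} [Field k] [Algebra k L] {x y : L}
    (hx : Transcendental k x) (hy : Transcendental ↥(Algebra.adjoin k ({x} : Set L)) y) :
    Transcendental ↥(Algebra.adjoin k ({y} : Set L)) x := by
  have hx' : AlgebraicIndependent k ![x] := algebraicIndependent_iff_transcendental.2 hx
  have hrx : Set.range ![x] = ({x} : Set L) := by
    simp [Matrix.range_cons]
  have h1 : AlgebraicIndependent k fun o : Option (Fin 1) => o.elim y ![x] :=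
    (hx'.option_iff_transcendental y).2 (by rwa [hrx])
  have h2 : AlgebraicIndependent k fun o : Option (Fin 1) => o.elim x ![y] := by
    have e : Option (Fin 1) ≃ Option (Fin 1) := Equiv.swap none (some 0)
    have := h1.comp (Equiv.swap none (some 0)) (Equiv.injective _)
    convert this using 1
    funext o
    match o with
    | none => simp
    | some 0 => simp
  have hy' : AlgebraicIndependent k ![y] := by
    have := h2.comp (fun i : Fin 1 => some i) (fun a b hab => Option.some_injective _ hab)
    convert this using 1
    funext i; rfl
  have hry : Set.range ![y] = ({y} : Set L) := by
    simp [Matrix.range_cons]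
  have := (hy'.option_iff_transcendental x).1 h2
  rwa [hry] at this

theorem stmt1_exchange {K : Subfield L} {x y : L} (hx : Transcendental ↥K x)
    (hxy : IsAlgebraic ↥(stmt1_adj K {y}) x) : IsAlgebraic ↥(stmt1_adj K {x}) y := by
  by_contra hty
  have hy : Transcendental ↥(Algebra.adjoin ↥K ({x} : Set L)) y :=
    fun halg => hty (stmt1_bridge_a K {x} halg)
  exact (stmt1_pair_symm hx hy) (stmt1_bridge_b K y hxy)

end Pair

section Rest
variable {L : Type*} [Field L]

theorem stmt1_adj_empty (K : Subfield L) : stmt1_adj K ∅ = K := by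
  simp [stmt1_adj, Subfield.closure_eq]

theorem stmt1_adj_mono {K K' : Subfield L} {S S' : Set L} (h : K ≤ K') (h' : S ⊆ S') :
    stmt1_adj K S ≤ stmt1_adj K' S' := by
  apply Subfield.closure_le.2
  rintro z (hz | hz)
  · exact stmt1_le_adj K' S' (h hz)
  · exact stmt1_subset_adj K' S' (h' hz)

theorem stmt1_adj_adj (K : Subfield L) (S T : Set L) :
    stmt1_adj (stmt1_adj K S) T = stmt1_adj K (S ∪ T) := by
  apply le_antisymm
  · apply Subfield.closure_le.2
    rintro z (hz | hz)
    · exact stmt1_adj_mono le_rfl Set.subset_union_left hz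
    · exact stmt1_subset_adj _ _ (Or.inr hz)
  · apply Subfield.closure_le.2
    rintro z (hz | hz | hz)
    · exact stmt1_le_adj _ _ (stmt1_le_adj _ _ hz)
    · exact stmt1_le_adj _ _ (stmt1_subset_adj K S hz)
    · exact stmt1_subset_adj _ _ hz

theorem stmt1_alg_mono {K K' : Subfield L} (h : K ≤ K') {x : L} :
    IsAlgebraic ↥K x → IsAlgebraic ↥K' x := by
  intro ha
  exact stmt1_aux_W0 (L := L) (Subfield.inclusion h)
    (fun a b hab => Subtype.ext (congrArg Subtype.val hab : ((Subfield.inclusion h) a : L) = _))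
    (fun a => rfl) ha

theorem stmt1_trans_mono {K K' : Subfield L} (h : K ≤ K') {x : L} :
    Transcendental ↥K' x → Transcendental ↥K x :=
  fun ht ha => ht (stmt1_alg_mono h ha)

theorem stmt1_alg_congr {K K' : Subfield L} (h : K = K') {x : L} :
    IsAlgebraic ↥K x → IsAlgebraic ↥K' x := by subst h; exact id

/-- descend algebraicity through a simple adjunction by an algebraic element. -/
theorem stmt1_step (N : Subfield L) (a : L) (ha : IsAlgebraic ↥N a)
    (halg : ∀ z : L, IsAlgebraic ↥(stmt1_adj N {a}) z) : ∀ z : L, IsAlgebraic ↥N z := by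
  set A := IntermediateField.adjoin ↥N ({a} : Set L) with hA
  haveI h1 : Algebra.IsAlgebraic ↥N ↥A :=
    IntermediateField.isAlgebraic_adjoin_simple ha.isIntegral
  let f : ↥(stmt1_adj N {a}) →+* ↥A :=
    { toFun := fun z => ⟨z.1, (stmt1_mem_adj_iff N {a} z.1).1 z.2⟩
      map_one' := rfl
      map_mul' := fun _ _ => rfl
      map_zero' := rfl
      map_add' := fun _ _ => rfl }
  haveI h2 : Algebra.IsAlgebraic ↥A L := by
    constructor
    intro z
    exact stmt1_aux_W0 (L := L) f
      (fun u v huv => Subtype.ext (congrArg Subtype.val huv : ((f u : L)) = _))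
      (fun t => rfl) (halg z)
  haveI h3 : Algebra.IsAlgebraic ↥N L := Algebra.IsAlgebraic.trans ↥N ↥A L
  exact fun z => h3.isAlgebraic z

def stmt1_chain : Subfield L → List L → Prop
  | _, [] => True
  | K, a :: l => Transcendental ↥K a ∧ stmt1_chain (stmt1_adj K {a}) l

theorem stmt1_chain_congr {K K' : Subfield L} (h : K = K') {l : List L} :
    stmt1_chain K l → stmt1_chain K' l := by subst h; exact id

theorem stmt1_chain_append {K : Subfield L} {l : List L} {x : L} :
    stmt1_chain K l → Transcendental ↥(stmt1_adj K {a | a ∈ l}) x →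
      stmt1_chain K (l ++ [x]) := by
  induction l generalizing K with
  | nil =>
    intro _ hx
    refine ⟨?_, trivial⟩
    have heq : stmt1_adj K {a | a ∈ ([] : List L)} = K := by
      have h0 : {a | a ∈ ([] : List L)} = (∅ : Set L) := by simp
      rw [h0, stmt1_adj_empty]
    rw [← heq]
    exact hx
  | cons b l ih =>
    rintro ⟨hb, hl⟩ hx
    refine ⟨hb, ih hl ?_⟩
    have hset : stmt1_adj (stmt1_adj K {b}) {a | a ∈ l} = stmt1_adj K {a | a ∈ b :: l} := by
      rw [stmt1_adj_adj]
      congr 1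
      ext z; simp
    exact fun halg => hx (stmt1_alg_congr hset halg)

end Rest

section Core
variable {L : Type*} [Field L]

theorem stmt1_core : ∀ (n : ℕ) (K : Subfield L) (t : Finset L), t.card ≤ n →
    (∀ z : L, IsAlgebraic ↥(stmt1_adj K ↑t) z) →
    ∀ l : List L, stmt1_chain K l → l.length ≤ n := by
  intro n
  induction n with
  | zero =>
    intro K t hcard halg l hl
    cases l with
    | nil => simp
    | cons x l' =>
      exfalso
      have ht : t = ∅ := Finset.card_eq_zero.1 (Nat.le_zero.1 hcard)
      have h2 : IsAlgebraic ↥K x := by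
        apply stmt1_alg_congr ?_ (halg x)
        rw [ht, Finset.coe_empty, stmt1_adj_empty]
      exact hl.1 h2
  | succ n ih =>
    intro K t hcard halg l hl
    cases l with
    | nil => simp
    | cons x l' =>
      obtain ⟨hx, hl'⟩ := hl
      classical
      let S := t.powerset.filter (fun u : Finset L => IsAlgebraic ↥(stmt1_adj K (↑u : Set L)) x)
      have htS : t ∈ S := Finset.mem_filter.2 ⟨Finset.mem_powerset_self t, halg x⟩
      obtain ⟨u, huS, humin⟩ := S.exists_min_image Finset.card ⟨t, htS⟩
      have hut : u ⊆ t := Finset.mem_powerset.1 (Finset.mem_filter.1 huS).1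
      have hux : IsAlgebraic ↥(stmt1_adj K ↑u) x := (Finset.mem_filter.1 huS).2
      have hune : u.Nonempty := by
        rcases Finset.eq_empty_or_nonempty u with rfl | h
        · exact absurd (stmt1_alg_congr (by rw [Finset.coe_empty, stmt1_adj_empty]) hux) hx
        · exact h
      obtain ⟨a, ha⟩ := hune
      have hu'x : Transcendental ↥(stmt1_adj K ↑(u.erase a)) x := by
        intro halgx
        have hu'S : u.erase a ∈ S := Finset.mem_filter.2
          ⟨Finset.mem_powerset.2 ((Finset.erase_subset a u).trans hut), halgx⟩
        have h1 := humin _ hu'S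
        have hlt : (u.erase a).card < u.card := Finset.card_erase_lt_of_mem ha
        omega
      have hcoe : (↑u : Set L) = ↑(u.erase a) ∪ {a} := by
        ext z
        simp only [Finset.coe_erase, Set.mem_union, Set.mem_diff, Set.mem_singleton_iff,
          Finset.mem_coe]
        constructor
        · intro hz
          rcases eq_or_ne z a with rfl | hza
          · exact Or.inr rfl
          · exact Or.inl ⟨hz, hza⟩
        · rintro (⟨hz, _⟩ | rfl)
          · exact hz
          · exact ha
      have hxadj : IsAlgebraic ↥(stmt1_adj (stmt1_adj K ↑(u.erase a)) {a}) x := by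
        apply stmt1_alg_congr ?_ hux
        rw [stmt1_adj_adj, ← hcoe]
      have hax : IsAlgebraic ↥(stmt1_adj (stmt1_adj K ↑(u.erase a)) {x}) a :=
        stmt1_exchange hu'x hxadj
      have hcard₁ : (t.erase a).card ≤ n := by
        have := Finset.card_erase_of_mem (hut ha); omega
      have haN : IsAlgebraic ↥(stmt1_adj (stmt1_adj K {x}) ↑(t.erase a)) a := by
        apply stmt1_alg_mono ?_ hax
        rw [stmt1_adj_adj, stmt1_adj_adj]
        apply stmt1_adj_mono le_rfl
        rintro z (hz | hz)
        · exact Or.inr (Finset.coe_subset.2 (Finset.erase_subset_erase a hut) hz)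
        · exact Or.inl hz
      have halg₁ : ∀ z : L, IsAlgebraic ↥(stmt1_adj (stmt1_adj K {x}) ↑(t.erase a)) z := by
        apply stmt1_step _ a haN
        intro z
        apply stmt1_alg_mono ?_ (halg z)
        rw [stmt1_adj_adj, stmt1_adj_adj]
        apply stmt1_adj_mono le_rfl
        intro z hz
        rcases eq_or_ne z a with rfl | hza
        · exact Or.inr (Or.inr rfl)
        · exact Or.inr (Or.inl (by
            simp only [Finset.coe_erase, Set.mem_diff, Set.mem_singleton_iff, Finset.mem_coe]
            exact ⟨hz, hza⟩))
      have hlen := ih (stmt1_adj K {x}) (t.erase a) hcard₁ halg₁ l' hl'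
      simpa using Nat.succ_le_succ hlen

end Core

section Map
variable {L L' : Type*} [Field L] [Field L']

theorem stmt1_map_adj (ψ : L →+* L') (K : Subfield L) (S : Set L) :
    (stmt1_adj K S).map ψ = stmt1_adj (K.map ψ) (ψ '' S) := by
  unfold stmt1_adj
  rw [RingHom.map_field_closure, Set.image_union, Subfield.coe_map]

theorem stmt1_map_bot (ψ : L →+* L') : (⊥ : Subfield L).map ψ = (⊥ : Subfield L') := by
  rw [← Subfield.closure_empty, RingHom.map_field_closure, Set.image_empty,
    Subfield.closure_empty]

noncomputable def stmt1_mapEquiv (ψ : L →+* L') (K : Subfield L) : ↥K ≃+* ↥(K.map ψ) := by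
  refine RingEquiv.ofBijective
    ({ toFun := fun a => ⟨ψ a.1, Subfield.mem_map.2 ⟨a.1, a.2, rfl⟩⟩
       map_one' := Subtype.ext (by simp)
       map_mul' := fun a b => Subtype.ext (by simp)
       map_zero' := Subtype.ext (by simp)
       map_add' := fun a b => Subtype.ext (by simp) } : ↥K →+* ↥(K.map ψ)) ⟨?_, ?_⟩
  · intro a b hab
    exact Subtype.ext (ψ.injective (congrArg Subtype.val hab))
  · rintro ⟨b, hb⟩
    obtain ⟨a, ha, rfl⟩ := Subfield.mem_map.1 hb
    exact ⟨⟨a, ha⟩, rfl⟩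

theorem stmt1_alg_map_iff (ψ : L →+* L') (K : Subfield L) (x : L) :
    IsAlgebraic ↥K x ↔ IsAlgebraic ↥(K.map ψ) (ψ x) := by
  set e := stmt1_mapEquiv ψ K
  have key : ∀ q : Polynomial ↥K, ψ (aeval x q) = aeval (ψ x) (q.map (e : ↥K →+* ↥(K.map ψ))) := by
    intro q
    rw [aeval_def, aeval_def, eval₂_map, hom_eval₂]
    have h2 : (algebraMap ↥(K.map ψ) L').comp (e : ↥K →+* ↥(K.map ψ)) =
        ψ.comp (algebraMap ↥K L) := RingHom.ext fun a => rfl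
    rw [h2]
  constructor
  · rintro ⟨p, h0, he⟩
    refine ⟨p.map (e : ↥K →+* ↥(K.map ψ)),
      fun hh => h0 ((Polynomial.map_eq_zero_iff (e : ↥K →+* ↥(K.map ψ)).injective).1 hh), ?_⟩
    rw [← key, he, map_zero]
  · rintro ⟨p, h0, he⟩
    refine ⟨p.map (e.symm : ↥(K.map ψ) →+* ↥K),
      fun hh => h0 ((Polynomial.map_eq_zero_iff (e.symm : ↥(K.map ψ) →+* ↥K).injective).1 hh), ?_⟩
    apply ψ.injective
    rw [map_zero, key, Polynomial.map_map]
    have h1 : (e : ↥K →+* ↥(K.map ψ)).comp (e.symm : ↥(K.map ψ) →+* ↥K) = RingHom.id _ := by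
      ext a
      simp
    rw [h1, Polynomial.map_id, he]

theorem stmt1_chain_map (ψ : L →+* L') : ∀ {K : Subfield L} {l : List L},
    stmt1_chain K l → stmt1_chain (K.map ψ) (l.map ψ) := by
  intro K l
  induction l generalizing K with
  | nil => intro _; trivial
  | cons a l ih =>
    rintro ⟨ha, hl⟩
    refine ⟨fun halg => ha ((stmt1_alg_map_iff ψ K a).2 halg), ?_⟩
    have := ih hl
    apply stmt1_chain_congr ?_ this
    rw [stmt1_map_adj, Set.image_singleton]

end Map

/-- If `F` is a field finitely generated over its prime field and `E` is a subfield of `F`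
isomorphic to `F`, then `F` is algebraic over `E`. -/
theorem stmt1 {F : Type*} [Field F]
    (hfg : ∃ s : Finset F, Subfield.closure (s : Set F) = ⊤)
    (E : Subfield F) (hiso : Nonempty (E ≃+* F)) :
    Algebra.IsAlgebraic E F := by
  obtain ⟨s, hs⟩ := hfg
  obtain ⟨φ⟩ := hiso
  by_contra hna
  have hex : ∃ x : F, ¬ IsAlgebraic ↥E x := by
    by_contra h
    push_neg at h
    exact hna ⟨fun x => h x⟩
  obtain ⟨x, hx⟩ := hex
  have htop : stmt1_adj ⊥ (↑s : Set F) = ⊤ := by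
    apply top_unique
    rw [← hs]
    exact Subfield.closure_mono Set.subset_union_right
  have halg : ∀ z : F, IsAlgebraic ↥(stmt1_adj ⊥ (↑s : Set F)) z := by
    intro z
    apply stmt1_alg_congr htop.symm
    exact isAlgebraic_algebraMap (⟨z, trivial⟩ : (⊤ : Subfield F))
  have claim : ∀ k : ℕ, ∃ l : List F, stmt1_chain (⊥ : Subfield F) l ∧ l.length = k := by
    intro k
    induction k with
    | zero => exact ⟨[], trivial, rfl⟩
    | succ k ih =>
      obtain ⟨l, hl, hlen⟩ := ih
      have h1 := stmt1_chain_map (φ.symm : F →+* ↥E) hl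
      rw [stmt1_map_bot] at h1
      have h2 := stmt1_chain_map E.subtype h1
      rw [stmt1_map_bot] at h2
      refine ⟨((l.map (φ.symm : F →+* ↥E)).map E.subtype) ++ [x],
        stmt1_chain_append h2 ?_, by simp [hlen]⟩
      refine stmt1_trans_mono (K' := E) ?_ hx
      apply Subfield.closure_le.2
      rintro z (hz | hz)
      · exact (bot_le : (⊥ : Subfield F) ≤ E) hz
      · simp only [Set.mem_setOf_eq, List.mem_map] at hz
        obtain ⟨w, _, rfl⟩ := hz
        exact w.2
  obtain ⟨l, hl, hlen⟩ := claim (s.card + 1)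
  have := stmt1_core s.card ⊥ s le_rfl halg l hl
  omega
end

section
/- There is a (unique) group homomorphism ι: G → G satisfying ι((n,τ)) = (n+1,τ) for every (n,τ) ∈ V(T), ι(a) = a, ι(b_i) = b_i for every i ∈ ℤ, and ι(t) = t. -/
/-- Generators of the group `K`: tree vertices `(n,τ)`, the letter `a`, and letters `bᵢ`. -/
inductive KGen : Type
  | vert : ℕ → List ℤ → KGen
  | a : KGen
  | b : ℤ → KGen
  deriving DecidableEq

/-- The parent `(n,τ)⁻` of a vertex `(n,τ)` of the tree `T`. -/
def parent : ℕ → List ℤ → ℕ × List ℤ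
  | n, [] => (n + 1, [])
  | n, τ => (n, τ.dropLast)

/-- Words over an alphabet `α` (a letter together with `true` for the letter itself,
`false` for its formal inverse). -/
abbrev Word (α : Type) := List (α × Bool)

/-- The word `u(x,y) = x y x² y x³ y ⋯ x¹⁰⁰ y`. -/
def uWord {α : Type} (x y : α) : Word α :=
  (List.range 100).flatMap fun k => List.replicate (k + 1) (x, true) ++ [(y, true)]

/-- The relator words of the presentation of `K`:
`u((n,τ),a) ((n,τ)⁻)⁻¹` and `u((n,τ),bᵢ) ((n,τ⌢⟨i⟩))⁻¹`. -/
def KRelWords : Set (Word KGen) :=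
  { w | (∃ (n : ℕ) (τ : List ℤ), w = uWord (KGen.vert n τ) KGen.a ++ [(KGen.vert (parent n τ).1 (parent n τ).2, false)]) ∨
        (∃ (n : ℕ) (τ : List ℤ) (i : ℤ), w = uWord (KGen.vert n τ) (KGen.b i) ++ [(KGen.vert n (τ ++ [i]), false)]) }

/-- The relators of `K` as elements of the free group. -/
def KRels : Set (FreeGroup KGen) := FreeGroup.mk '' KRelWords

/-- The group `K`. -/
abbrev K := PresentedGroup KRels

/-- Generators of `G`: the generators of `K` together with the stable letter `t = none`. -/
abbrev GGen := Option KGen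

/-- The relator words of the presentation of `G = ⟨K, t ∣ t bᵢ t⁻¹ = b_{i+1}⟩`:
the relators of `K` together with `t bᵢ t⁻¹ b_{i+1}⁻¹`. -/
def GRelWords : Set (Word GGen) :=
  (fun w : Word KGen => w.map fun p => (some p.1, p.2)) '' KRelWords ∪
    { w | ∃ i : ℤ, w = [((none : GGen), true), (some (KGen.b i), true), ((none : GGen), false),
        (some (KGen.b (i + 1)), false)] }

/-- The relators of `G` as elements of the free group. -/
def GRels : Set (FreeGroup GGen) := FreeGroup.mk '' GRelWords

/-- The group `G`, the HNN extension of `K` along `bᵢ ↦ b_{i+1}`. -/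
abbrev G := PresentedGroup GRels

/-- The vertex `(n,τ)` as an element of `G`. -/
def gvert (n : ℕ) (τ : List ℤ) : G := PresentedGroup.of (some (KGen.vert n τ))

/-- `a` as an element of `G`. -/
def ga : G := PresentedGroup.of (some KGen.a)

/-- `bᵢ` as an element of `G`. -/
def gb (i : ℤ) : G := PresentedGroup.of (some (KGen.b i))

/-- The stable letter `t` as an element of `G`. -/
def gt' : G := PresentedGroup.of (none : GGen)


/-- The shift map on generators of `K`. -/
def kshift : KGen → KGen
  | KGen.vert n τ => KGen.vert (n + 1) τ
  | x => x

/-- The shift map on generators of `G`. -/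
def gshift : GGen → GGen := Option.map kshift

lemma uWord_map {α β : Type} (g : α → β) (x y : α) :
    (uWord x y).map (fun p => (g p.1, p.2)) = uWord (g x) (g y) := by
  simp [uWord, List.map_flatMap]

lemma parent_shift (n : ℕ) (τ : List ℤ) :
    parent (n + 1) τ = ((parent n τ).1 + 1, (parent n τ).2) := by
  cases τ <;> simp [parent]

lemma kshift_mem (v : Word KGen) (hv : v ∈ KRelWords) :
    v.map (fun p => (kshift p.1, p.2)) ∈ KRelWords := by
  rcases hv with ⟨n, τ, rfl⟩ | ⟨n, τ, i, rfl⟩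
  · left
    refine ⟨n + 1, τ, ?_⟩
    rw [List.map_append, uWord_map, parent_shift]
    rfl
  · right
    refine ⟨n + 1, τ, i, ?_⟩
    rw [List.map_append, uWord_map]
    rfl

lemma shift_mem (r : FreeGroup GGen) (hr : r ∈ GRels) :
    FreeGroup.map gshift r ∈ GRels := by
  obtain ⟨w, hw, rfl⟩ := hr
  rw [FreeGroup.map.mk]
  refine ⟨_, ?_, rfl⟩
  rcases hw with ⟨v, hv, rfl⟩ | ⟨i, rfl⟩
  · left
    refine ⟨v.map (fun p => (kshift p.1, p.2)), kshift_mem v hv, ?_⟩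
    simp [List.map_map, Function.comp, gshift]
  · right
    exact ⟨i, by simp [gshift, kshift]⟩

/-- There is a unique group homomorphism `ι : G → G` with `ι((n,τ)) = (n+1,τ)`, `ι(a) = a`,
`ι(bᵢ) = bᵢ` and `ι(t) = t`. -/
theorem stmt5 : ∃! ι : G →* G,
    (∀ (n : ℕ) (τ : List ℤ), ι (gvert n τ) = gvert (n + 1) τ) ∧
    ι ga = ga ∧ (∀ i : ℤ, ι (gb i) = gb i) ∧ ι gt' = gt' := by
  have key : ∀ r ∈ GRels,
      FreeGroup.lift (fun x : GGen => (PresentedGroup.of (gshift x) : G)) r = 1 := by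
    intro r hr
    have hcomp : FreeGroup.lift (fun x : GGen => (PresentedGroup.of (gshift x) : G)) =
        (QuotientGroup.mk' (Subgroup.normalClosure GRels)).comp (FreeGroup.map gshift) := by
      apply FreeGroup.ext_hom
      intro x
      rfl
    rw [hcomp]
    exact (QuotientGroup.eq_one_iff _).mpr (Subgroup.subset_normalClosure (shift_mem r hr))
  refine ⟨PresentedGroup.toGroup key, ⟨?_, ?_, ?_, ?_⟩, ?_⟩
  · intro n τ
    exact PresentedGroup.toGroup.of key
  · exact PresentedGroup.toGroup.of key
  · intro i
    exact PresentedGroup.toGroup.of key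
  · exact PresentedGroup.toGroup.of key
  · rintro ι' ⟨h1, h2, h3, h4⟩
    apply PresentedGroup.ext
    rintro (_ | x)
    · exact h4
    · cases x with
      | vert n τ => exact (h1 n τ).trans (PresentedGroup.toGroup.of (x := some (KGen.vert n τ)) key).symm
      | a => exact h2.trans (PresentedGroup.toGroup.of (x := some KGen.a) key).symm
      | b i => exact (h3 i).trans (PresentedGroup.toGroup.of (x := some (KGen.b i)) key).symm
end

section
/- The group homomorphism ι: G → G determined by ι((n,τ)) = (n+1,τ) for every (n,τ) ∈ V(T), ι(a) = a, ι(b_i) = b_i for every i ∈ ℤ, and ι(t) = t is injective, and its image is exactly the subgroup H; in particular, H is isomorphic to G. -/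
/-- The subgroup `H` of `G` generated by `(1,⟨⟩)`, `a`, `b₀` and `t`. -/
def H : Subgroup G := Subgroup.closure {gvert 1 [], ga, gb 0, gt'}

section
variable {α β : Type} {M : Type} [Group M]

def wprod (f : α → M) (L : Word α) : M := (L.map fun p => cond p.2 (f p.1) (f p.1)⁻¹).prod

lemma hom_mk (φ : FreeGroup α →* M) (L : Word α) :
    φ (FreeGroup.mk L) = wprod (fun x => φ (FreeGroup.of x)) L := by
  rw [show φ (FreeGroup.mk L) = FreeGroup.lift (fun x => φ (FreeGroup.of x)) (FreeGroup.mk L) from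
    FreeGroup.lift_unique φ (fun _ => rfl), FreeGroup.lift_mk]; rfl

lemma wprod_append (f : α → M) (L1 L2 : Word α) :
    wprod f (L1 ++ L2) = wprod f L1 * wprod f L2 := by
  simp [wprod]

lemma wprod_mapEmb (f : β → M) (g : α → β) (L : Word α) :
    wprod f (L.map fun p => (g p.1, p.2)) = wprod (fun x => f (g x)) L := by
  simp [wprod, List.map_map]; rfl

def uProd (x y : M) : M := ((List.range 100).map fun k => x ^ (k + 1) * y).prod

lemma wprod_uWord (f : α → M) (x y : α) : wprod f (uWord x y) = uProd (f x) (f y) := by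
  unfold uWord uProd wprod
  induction (List.range 100) with
  | nil => simp
  | cons k l ih =>
      simp only [List.flatMap_cons, List.map_cons, List.prod_cons, List.map_append,
        List.prod_append, ih]
      simp [List.map_replicate, List.prod_replicate]
end

lemma relw {w : Word GGen} (hw : w ∈ GRelWords) :
    PresentedGroup.mk GRels (FreeGroup.mk w) = 1 := by
  have hm : FreeGroup.mk w ∈ Subgroup.normalClosure GRels :=
    Subgroup.subset_normalClosure ⟨w, hw, rfl⟩
  exact (QuotientGroup.eq_one_iff _).2 hm

lemma grel_eval {X Y Z : KGen}
    (hw : (uWord X Y ++ [(Z, false)]) ∈ KRelWords) :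
    uProd (PresentedGroup.of (some X) : G) (PresentedGroup.of (some Y))
      = PresentedGroup.of (some Z) := by
  have h := relw (Set.mem_union_left _ ⟨_, hw, rfl⟩)
  simp only at h
  rw [hom_mk, List.map_append, wprod_append, wprod_mapEmb] at h
  rw [wprod_uWord] at h
  have h2 : wprod (fun x => (PresentedGroup.mk GRels) (FreeGroup.of x))
      ([(Z, false)].map fun p => ((some p.1 : GGen), p.2))
      = (PresentedGroup.of (some Z) : G)⁻¹ := by
    simp [wprod]; rfl
  rw [h2] at h
  exact mul_inv_eq_one.mp h

lemma rel_a (n : ℕ) (τ : List ℤ) :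
    uProd (gvert n τ) ga = gvert (parent n τ).1 (parent n τ).2 :=
  grel_eval (Or.inl ⟨n, τ, rfl⟩)

lemma rel_b (n : ℕ) (τ : List ℤ) (i : ℤ) :
    uProd (gvert n τ) (gb i) = gvert n (τ ++ [i]) :=
  grel_eval (Or.inr ⟨n, τ, i, rfl⟩)

lemma rel_t (i : ℤ) : gt' * gb i * gt'⁻¹ = gb (i + 1) := by
  have h := relw (Set.mem_union_right _ ⟨i, rfl⟩)
  rw [hom_mk] at h
  simp only [wprod, List.map_cons, List.map_nil, List.prod_cons, List.prod_nil, cond] at h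
  have h' : (gt' * gb i * gt'⁻¹) * (gb (i+1))⁻¹ = 1 := by
    simpa [gt', gb, PresentedGroup.of, mul_assoc] using h
  exact mul_inv_eq_one.mp h'

lemma parent_nil (n : ℕ) : parent n [] = (n + 1, []) := rfl
lemma parent_cons (n : ℕ) (x : ℤ) (τ : List ℤ) :
    parent n (x :: τ) = (n, (x :: τ).dropLast) := rfl

def piFun : GGen → G
  | none => gt'
  | some KGen.a => ga
  | some (KGen.b i) => gb i
  | some (KGen.vert 0 τ) => gvert 0 (0 :: τ)
  | some (KGen.vert (n+1) τ) => gvert n τ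

lemma wprod_single_inv {α M : Type} [Group M] (f : α → M) (z : α) :
    wprod f [(z, false)] = (f z)⁻¹ := by
  simp [wprod]

lemma pi_cond : ∀ r ∈ GRels, FreeGroup.lift piFun r = 1 := by
  rintro r ⟨w, hw, rfl⟩
  rw [show FreeGroup.lift piFun (FreeGroup.mk w) = wprod piFun w from FreeGroup.lift_mk]
  rcases hw with ⟨w', hw', rfl⟩ | ⟨i, rfl⟩
  · rw [wprod_mapEmb]
    rcases hw' with ⟨n, τ, rfl⟩ | ⟨n, τ, i, rfl⟩
    · rw [wprod_append, wprod_uWord, wprod_single_inv, mul_inv_eq_one]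
      match n, τ with
      | 0, [] =>
          show uProd (gvert 0 [0]) ga = gvert 0 []
          rw [rel_a 0 [0]]; rfl
      | 0, (x :: τ') =>
          show uProd (gvert 0 (0 :: x :: τ')) ga = gvert 0 (0 :: (x :: τ').dropLast)
          rw [rel_a 0 (0 :: x :: τ'), parent_cons, List.dropLast_cons₂]
      | (m+1), [] =>
          show uProd (gvert m []) ga = gvert (m + 1) []
          rw [rel_a m [], parent_nil]
      | (m+1), (x :: τ') =>
          show uProd (gvert m (x :: τ')) ga = gvert m ((x :: τ').dropLast)
          rw [rel_a m (x :: τ'), parent_cons]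
    · rw [wprod_append, wprod_uWord, wprod_single_inv, mul_inv_eq_one]
      match n with
      | 0 =>
          show uProd (gvert 0 (0 :: τ)) (gb i) = gvert 0 (0 :: (τ ++ [i]))
          rw [rel_b 0 (0 :: τ) i]; rfl
      | (m+1) =>
          show uProd (gvert m τ) (gb i) = gvert m (τ ++ [i])
          exact rel_b m τ i
  · show gt' * (gb i * (gt'⁻¹ * ((gb (i+1))⁻¹ * 1))) = 1
    rw [mul_one, ← mul_assoc, ← mul_assoc, rel_t i, mul_inv_cancel]

def piHom : G →* G := PresentedGroup.toGroup pi_cond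

lemma ga_mem : ga ∈ H := Subgroup.subset_closure (by simp)
lemma gt_mem : gt' ∈ H := Subgroup.subset_closure (by simp)
lemma gb0_mem : gb 0 ∈ H := Subgroup.subset_closure (by simp)
lemma gvert1_mem : gvert 1 [] ∈ H := Subgroup.subset_closure (by simp)

lemma uProd_mem {S : Subgroup G} {x y : G} (hx : x ∈ S) (hy : y ∈ S) : uProd x y ∈ S := by
  apply Subgroup.list_prod_mem
  intro z hz
  rw [List.mem_map] at hz
  obtain ⟨k, -, rfl⟩ := hz
  exact mul_mem (pow_mem hx _) hy

lemma gb_mem (i : ℤ) : gb i ∈ H := by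
  induction i using Int.induction_on with
  | zero => exact gb0_mem
  | succ i ih => rw [← rel_t i]; exact mul_mem (mul_mem gt_mem ih) (inv_mem gt_mem)
  | pred i ih =>
      have h := rel_t (-i - 1)
      rw [show (-i : ℤ) - 1 + 1 = -i by ring] at h
      have h2 : gb (-i - 1) = gt'⁻¹ * gb (-i) * gt' := by rw [← h]; group
      rw [h2]
      exact mul_mem (mul_mem (inv_mem gt_mem) ih) gt_mem

lemma gvert_nil_mem (n : ℕ) : gvert (n + 1) [] ∈ H := by
  induction n with
  | zero => exact gvert1_mem
  | succ m ih =>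
      have h := rel_a (m + 1) []
      rw [parent_nil] at h
      rw [← h]
      exact uProd_mem ih ga_mem

lemma gvert_mem (n : ℕ) (τ : List ℤ) : gvert (n + 1) τ ∈ H := by
  induction τ using List.reverseRecOn with
  | nil => exact gvert_nil_mem n
  | append_singleton τ i ih =>
      rw [← rel_b (n + 1) τ i]
      exact uProd_mem ih (gb_mem i)


/-- The homomorphism `ι : G → G` determined by `ι((n,τ)) = (n+1,τ)`, `ι(a) = a`, `ι(bᵢ) = bᵢ`
and `ι(t) = t` is injective with image exactly `H`; in particular `H ≅ G`. -/
theorem stmt6 (ι : G →* G)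
    (hvert : ∀ (n : ℕ) (τ : List ℤ), ι (gvert n τ) = gvert (n + 1) τ)
    (ha : ι ga = ga) (hb : ∀ i : ℤ, ι (gb i) = gb i) (ht : ι gt' = gt') :
    Function.Injective ι ∧ ι.range = H ∧ Nonempty (H ≃* G) := by
  have hkey : ∀ g : G, piHom (ι g) = g := by
    have : piHom.comp ι = MonoidHom.id G := by
      apply PresentedGroup.ext
      intro x
      cases x with
      | none =>
          show piHom (ι gt') = gt'
          rw [ht]
          exact PresentedGroup.toGroup.of pi_cond
      | some k =>
          cases k with
          | a =>
              show piHom (ι ga) = ga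
              rw [ha]
              exact PresentedGroup.toGroup.of pi_cond
          | b i =>
              show piHom (ι (gb i)) = gb i
              rw [hb]
              exact PresentedGroup.toGroup.of pi_cond
          | vert n τ =>
              show piHom (ι (gvert n τ)) = gvert n τ
              rw [hvert]
              exact PresentedGroup.toGroup.of pi_cond
    exact fun g => DFunLike.congr_fun this g
  have hinj : Function.Injective ι := Function.LeftInverse.injective hkey
  have hrange : ι.range = H := by
    apply le_antisymm
    · rintro _ ⟨g, rfl⟩
      refine PresentedGroup.generated_by GRels (H.comap ι) ?_ g
      intro j
      cases j with
      | none => exact (Subgroup.mem_comap).2 (by rw [show (PresentedGroup.of none : G) = gt' from rfl, ht]; exact gt_mem)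
      | some k =>
          cases k with
          | a => exact (Subgroup.mem_comap).2 (by rw [show (PresentedGroup.of (some KGen.a) : G) = ga from rfl, ha]; exact ga_mem)
          | b i => exact (Subgroup.mem_comap).2 (by rw [show (PresentedGroup.of (some (KGen.b i)) : G) = gb i from rfl, hb]; exact gb_mem i)
          | vert n τ => exact (Subgroup.mem_comap).2 (by rw [show (PresentedGroup.of (some (KGen.vert n τ)) : G) = gvert n τ from rfl, hvert]; exact gvert_mem n τ)
    · rw [H]
      apply (Subgroup.closure_le _).2
      intro x hx
      simp only [Set.mem_insert_iff, Set.mem_singleton_iff] at hx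
      rcases hx with rfl | rfl | rfl | rfl
      · exact ⟨gvert 0 [], hvert 0 []⟩
      · exact ⟨ga, ha⟩
      · exact ⟨gb 0, hb 0⟩
      · exact ⟨gt', ht⟩
  refine ⟨hinj, hrange, ⟨?_⟩⟩
  exact (MulEquiv.subgroupCongr hrange.symm).trans (MonoidHom.ofInjective hinj).symm
end

section
/- The given presentation of K satisfies the C'(1/10) small cancellation condition. -/
/-- A word is reduced if it contains no adjacent cancelling pair. -/
def IsReducedWord {α : Type} [DecidableEq α] (w : Word α) : Prop := FreeGroup.reduce w = w

/-- The formal inverse of a word. -/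
def wordInv {α : Type} (w : Word α) : Word α := (w.map fun p => (p.1, !p.2)).reverse

/-- `w` is a cyclic permutation of `v`. -/
def IsCyclicPermOf {α : Type} (w v : Word α) : Prop := ∃ x y, v = x ++ y ∧ w = y ++ x

/-- A word is cyclically reduced if it is reduced even when read cyclically. -/
def IsCyclicallyReduced {α : Type} [DecidableEq α] (w : Word α) : Prop := IsReducedWord (w ++ w)

/-- `r'` is the cyclic reduction of `r`: `r'` is cyclically reduced and the reduced form of `r`
is `c⁻¹ r' c` for some word `c`. -/
def IsCyclicReductionOf {α : Type} [DecidableEq α] (r' r : Word α) : Prop :=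
  IsCyclicallyReduced r' ∧ ∃ c : Word α, FreeGroup.reduce r = wordInv c ++ r' ++ c

/-- The symmetrized closure of a set of relators: all cyclic permutations of the cyclic
reductions of the relators and of their inverses. -/
def symmClosure {α : Type} [DecidableEq α] (R : Set (Word α)) : Set (Word α) :=
  { w | ∃ r ∈ R, ∃ r', IsCyclicReductionOf r' r ∧
      (IsCyclicPermOf w r' ∨ IsCyclicPermOf w (wordInv r')) }

/-- A word `w` is Dehn-minimal w.r.t. relators `R` if it contains no subword `v` which is also
a subword of some `r` in the symmetrized closure of `R` with `|v| > |r|/2`. -/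
def DehnMinimal {α : Type} [DecidableEq α] (R : Set (Word α)) (w : Word α) : Prop :=
  ∀ v r : Word α, r ∈ symmClosure R → v <:+: w → v <:+: r → 2 * v.length ≤ r.length

/-- A piece: a reduced word which is a common initial segment of two distinct elements of the
symmetrized closure of the relator set. -/
def IsPiece {α : Type} [DecidableEq α] (R : Set (Word α)) (p : Word α) : Prop :=
  IsReducedWord p ∧ ∃ r₁ ∈ symmClosure R, ∃ r₂ ∈ symmClosure R, r₁ ≠ r₂ ∧ p <+: r₁ ∧ p <+: r₂

/-! ### Auxiliary development for the small cancellation proof -/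

namespace SmallCancelAux

open List

/-- `Y k` is the position of the `k`-th `y`-letter (0-indexed) in a relator word. -/
def Y : ℕ → ℕ
  | 0 => 1
  | k+1 => Y k + (k+3)

/-- `PL n` is the length of the first `n` blocks of `u(x,y)`. -/
def PL : ℕ → ℕ
  | 0 => 0
  | n+1 => Y n + 1

lemma PL_succ (n : ℕ) : PL (n+1) = PL n + (n+2) := by
  cases n with
  | zero => rfl
  | succ m => show Y (m+1) + 1 = (Y m + 1) + (m+3); simp only [Y]; omega

lemma Y_eq_PL (k : ℕ) : Y k = PL k + (k+1) := by
  induction k with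
  | zero => rfl
  | succ k ih => show Y k + (k+3) = (Y k + 1) + (k+2); omega

lemma PL_mono {a b : ℕ} (h : a ≤ b) : PL a ≤ PL b := by
  induction b with
  | zero =>
    have : a = 0 := by omega
    subst this; exact le_refl _
  | succ b ih =>
    rcases Nat.lt_succ_iff_lt_or_eq.mp (Nat.lt_succ_of_le h) with h' | h'
    · have h2 := ih (by omega); have h3 := PL_succ b; omega
    · subst h'; exact le_refl _

lemma Y_lt_PL {k n : ℕ} (h : k < n) : Y k < PL n := by
  have h1 : PL (k+1) ≤ PL n := PL_mono h
  have h2 : PL (k+1) = Y k + 1 := rfl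
  omega

lemma Y_strict {k l : ℕ} (h : k < l) : Y k < Y l := by
  have := Y_lt_PL h
  have := Y_eq_PL l
  omega

lemma Y_mono {k l : ℕ} (h : k ≤ l) : Y k ≤ Y l := by
  rcases Nat.lt_or_ge k l with h' | h'
  · exact le_of_lt (Y_strict h')
  · have : k = l := by omega
    subst this; exact le_refl _

lemma Y99 : Y 99 = 5149 := by decide

lemma PL100 : PL 100 = 5150 := by
  show Y 99 + 1 = 5150
  rw [Y99]

lemma Y_pos (k : ℕ) : 1 ≤ Y k := by
  have := Y_eq_PL k; omega

/-- Boolean test for `∃ k < n, m = Y k`. -/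
def isY : ℕ → ℕ → Bool
  | 0, _ => false
  | n+1, m => (m == Y n) || isY n m

lemma isY_iff {n m : ℕ} : isY n m = true ↔ ∃ k, k < n ∧ m = Y k := by
  induction n with
  | zero => simp [isY]
  | succ n ih =>
    simp only [isY, Bool.or_eq_true, beq_iff_eq, ih]
    constructor
    · rintro (rfl | ⟨k, hk, rfl⟩)
      · exact ⟨n, by omega, rfl⟩
      · exact ⟨k, by omega, rfl⟩
    · rintro ⟨k, hk, rfl⟩
      rcases Nat.lt_succ_iff_lt_or_eq.mp hk with h | rfl
      · exact Or.inr ⟨k, h, rfl⟩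
      · exact Or.inl rfl

/-- The letter pattern of a relator word: `0` = main letter, `1` = `y`-letter, `2` = final
inverse letter. -/
def dpat (m : ℕ) : ℕ := if m = 5150 then 2 else if isY 100 m then 1 else 0

/-- The pattern of the doubled relator word. -/
def DP (m : ℕ) : ℕ := dpat (m % 5151)

lemma dpat_le (m : ℕ) : dpat m ≤ 2 := by
  unfold dpat; split
  · omega
  · split <;> omega

lemma DP_le (m : ℕ) : DP m ≤ 2 := dpat_le _

lemma dpat_5150 : dpat 5150 = 2 := by simp [dpat]

lemma dpat_Y {k : ℕ} (hk : k < 100) : dpat (Y k) = 1 := by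
  have h1 : Y k ≤ 5149 := by
    have := Y_mono (show k ≤ 99 by omega); rw [Y99] at this; exact this
  unfold dpat
  rw [if_neg (by omega), if_pos (isY_iff.mpr ⟨k, hk, rfl⟩)]

lemma dpat_zero {m : ℕ} (h0 : ∀ k, k < 100 → m ≠ Y k) (h1 : m ≠ 5150) : dpat m = 0 := by
  have h2 : isY 100 m = false := by
    rw [Bool.eq_false_iff]
    intro hc
    obtain ⟨k, hk, rfl⟩ := isY_iff.mp hc
    exact h0 k hk rfl
  unfold dpat
  rw [if_neg h1, h2]
  rfl

lemma dpat_0 : dpat 0 = 0 :=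
  dpat_zero (fun k _ h => by have := Y_pos k; omega) (by omega)

lemma dpat_1 : dpat 1 = 1 := dpat_Y (k := 0) (by omega)

lemma dpat_ne_zero {m : ℕ} (h : dpat m ≠ 0) : m = 5150 ∨ ∃ k, k < 100 ∧ m = Y k := by
  by_contra hc
  push_neg at hc
  exact h (dpat_zero (fun k hk he => hc.2 k hk he) hc.1)

lemma dpat_eq_two {m : ℕ} (h : dpat m = 2) : m = 5150 := by
  by_contra hc
  unfold dpat at h
  rw [if_neg hc] at h
  split at h <;> omega

lemma dpat_between {k m : ℕ} (hk : k < 99) (h1 : Y k < m) (h2 : m < Y (k+1)) : dpat m = 0 := by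
  apply dpat_zero
  · intro j hj he
    rcases Nat.lt_or_ge j (k+1) with h' | h'
    · have := Y_mono (show j ≤ k by omega); omega
    · have := Y_mono (show k+1 ≤ j by omega); omega
  · have := Y_mono (show k+1 ≤ 99 by omega)
    rw [Y99] at this
    omega

/-- In any `101`-window one finds a `y`-position. -/
lemma find_Y : ∀ k, k ≤ 99 → ∀ r, r ≤ Y k → ∃ j, j < 100 ∧ r ≤ Y j ∧ Y j ≤ r + 100 := by
  intro k
  induction k with
  | zero =>
    intro _ r hr
    exact ⟨0, by omega, hr, by have : Y 0 = 1 := rfl; omega⟩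
  | succ k ih =>
    intro hk r hr
    by_cases h : r ≤ Y k
    · exact ih (by omega) r h
    · refine ⟨k+1, by omega, hr, ?_⟩
      have : Y (k+1) = Y k + (k+3) := rfl
      omega

lemma next_nonzero (t : ℕ) : ∃ i, i ≤ 100 ∧ DP (t + i) ≠ 0 := by
  have hr : t % 5151 < 5151 := Nat.mod_lt _ (by omega)
  suffices h : ∃ q, t % 5151 ≤ q ∧ q ≤ t % 5151 + 100 ∧ q ≤ 5150 ∧ dpat q ≠ 0 by
    obtain ⟨q, h1, h2, h3, h4⟩ := h
    refine ⟨q - (t % 5151), by omega, ?_⟩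
    have he : (t + (q - t % 5151)) % 5151 = q := by omega
    unfold DP
    rw [he]
    exact h4
  by_cases hbig : 5050 ≤ t % 5151
  · exact ⟨5150, by omega, by omega, le_refl _, by rw [dpat_5150]; omega⟩
  · obtain ⟨j, hj, hj1, hj2⟩ := find_Y 99 (le_refl _) (t % 5151) (by rw [Y99]; omega)
    have : Y j ≤ 5149 := by
      have := Y_mono (show j ≤ 99 by omega); rw [Y99] at this; exact this
    exact ⟨Y j, hj1, hj2, by omega, by rw [dpat_Y hj]; omega⟩

lemma next_zero (t : ℕ) : ∃ i, i ≤ 2 ∧ DP (t + i) = 0 := by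
  have hr : t % 5151 < 5151 := Nat.mod_lt _ (by omega)
  by_cases h0 : dpat (t % 5151) = 0
  · exact ⟨0, by omega, by unfold DP; rw [show (t + 0) % 5151 = t % 5151 by omega]; exact h0⟩
  rcases dpat_ne_zero h0 with h | ⟨k, hk, hYk⟩
  · refine ⟨1, by omega, ?_⟩
    unfold DP
    rw [show (t + 1) % 5151 = 0 by omega]
    exact dpat_0
  · rcases Nat.lt_or_ge k 99 with hk99 | hk99
    · refine ⟨1, by omega, ?_⟩
      have hle : Y k ≤ 5148 := by
        have := Y_strict (show k < 99 by omega); rw [Y99] at this; omega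
      unfold DP
      rw [show (t + 1) % 5151 = Y k + 1 by omega]
      have hsucc : Y (k+1) = Y k + (k+3) := rfl
      exact dpat_between hk99 (by omega) (by omega)
    · have hk' : k = 99 := by omega
      subst hk'
      rw [Y99] at hYk
      refine ⟨2, by omega, ?_⟩
      unfold DP
      rw [show (t + 2) % 5151 = 0 by omega]
      exact dpat_0

/-- A "full gap" configuration in the doubled pattern: a nonzero letter at `t`, `g` zeros,
then a nonzero letter. -/
def Sig (t g : ℕ) : Prop :=
  DP t ≠ 0 ∧ DP (t + g + 1) ≠ 0 ∧ ∀ j, 1 ≤ j → j ≤ g → DP (t + j) = 0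

def tgt (g : ℕ) : ℕ := if g = 0 then 5149 else if g = 1 then 5150 else Y (g - 2)

/-- The gap length determines the position (mod 5151) of a full gap. -/
lemma sig_tgt {t g : ℕ} (hg : g ≤ 515) (h : Sig t g) : t % 5151 = tgt g := by
  obtain ⟨h1, h2, h3⟩ := h
  have hr : t % 5151 < 5151 := Nat.mod_lt _ (by omega)
  unfold DP at h1 h2 h3
  rcases dpat_ne_zero h1 with h5150 | ⟨k, hk, hYk⟩
  · -- the window starts at the `z⁻¹`; the following gap has length exactly 1
    have hg0 : g ≠ 0 := by
      intro hg0
      subst hg0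
      rw [show (t + 0 + 1) % 5151 = 0 by omega] at h2
      exact h2 dpat_0
    have hg1 : g < 2 := by
      by_contra hge
      push_neg at hge
      have := h3 2 (by omega) (by omega)
      rw [show (t + 2) % 5151 = 1 by omega, dpat_1] at this
      omega
    have : g = 1 := by omega
    subst this
    simpa [tgt] using h5150
  · rcases Nat.lt_or_ge k 99 with hk99 | hk99
    · -- full gap between two `y`'s; its length is `k+2`
      have hYsucc : Y (k+1) = Y k + (k+3) := rfl
      have hYle : Y (k+1) ≤ 5149 := by
        have := Y_mono (show k+1 ≤ 99 by omega); rw [Y99] at this; exact this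
      have hglow : ¬ g + 1 ≤ k + 2 := by
        intro hle
        apply h2
        rw [show (t + g + 1) % 5151 = t % 5151 + (g+1) by omega]
        exact dpat_between hk99 (by omega) (by omega)
      have hghigh : ¬ k + 3 ≤ g := by
        intro hle
        have := h3 (k+3) (by omega) hle
        rw [show (t + (k+3)) % 5151 = Y (k+1) by omega, dpat_Y (by omega)] at this
        omega
      have hgk : g = k + 2 := by omega
      subst hgk
      unfold tgt
      rw [if_neg (by omega), if_neg (by omega)]
      simpa using hYk
    · have hk' : k = 99 := by omega
      subst hk'
      rw [Y99] at hYk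
      have hg0 : g = 0 := by
        by_contra h0
        have := h3 1 (le_refl _) (by omega)
        rw [show (t + 1) % 5151 = 5150 by omega, dpat_5150] at this
        omega
      subst hg0
      simpa [tgt] using hYk

/-! ### Relator words and their letter patterns -/

/-- A generic relator word. -/
def relW (v y z : KGen) : Word KGen := uWord v y ++ [(z, false)]

/-- The letter of a relator word corresponding to a pattern value. -/
def codeL (v y z : KGen) (d : ℕ) : KGen × Bool :=
  if d = 0 then (v, true) else if d = 1 then (y, true) else (z, false)

def pump (v y : KGen) (n : ℕ) : Word KGen :=
  (List.range n).flatMap fun k => List.replicate (k + 1) (v, true) ++ [(y, true)]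

lemma uWord_eq_pump (v y : KGen) : uWord v y = pump v y 100 := rfl

lemma pump_succ (v y : KGen) (n : ℕ) :
    pump v y (n+1) = pump v y n ++ (List.replicate (n+1) (v, true) ++ [(y, true)]) := by
  unfold pump
  rw [List.range_succ, List.flatMap_append]
  simp

lemma pump_length (v y : KGen) (n : ℕ) : (pump v y n).length = PL n := by
  induction n with
  | zero => rfl
  | succ n ih =>
    rw [pump_succ]
    simp only [List.length_append, List.length_replicate, List.length_cons, List.length_nil, ih]
    have := PL_succ n
    omega

lemma pump_get (v y : KGen) : ∀ n m, m < PL n →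
    (pump v y n)[m]? = some (if isY n m then (y, true) else (v, true)) := by
  intro n
  induction n with
  | zero => intro m hm; simp [PL] at hm
  | succ n ih =>
    intro m hm
    have hYn : Y n = PL n + (n+1) := Y_eq_PL n
    have hPLs : PL (n+1) = PL n + (n+2) := PL_succ n
    rw [pump_succ, List.getElem?_append, pump_length]
    by_cases hl : m < PL n
    · rw [if_pos hl, ih m hl]
      have h1 : (m == Y n) = false := by simp; omega
      congr 1
      show (if isY n m then ((y, true) : KGen × Bool) else (v, true)) = _
      have : isY (n+1) m = isY n m := by simp [isY, h1]
      rw [this]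
    · rw [if_neg hl]
      have hj : m - PL n < n + 2 := by omega
      rw [List.getElem?_append]
      simp only [List.length_replicate]
      by_cases hj2 : m - PL n < n + 1
      · rw [if_pos hj2, List.getElem?_replicate, if_pos hj2]
        have h1 : (m == Y n) = false := by simp; omega
        have h2 : isY n m = false := by
          rw [Bool.eq_false_iff]
          intro hc
          obtain ⟨k, hk, rfl⟩ := isY_iff.mp hc
          exact absurd (Y_lt_PL hk) (by omega)
        have h3 : isY (n+1) m = false := by simp [isY, h1, h2]
        rw [h3]
        simp
      · have hmY : m = Y n := by omega
        have h4 : isY (n+1) m = true := isY_iff.mpr ⟨n, by omega, hmY⟩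
        rw [if_neg hj2, show m - PL n - (n+1) = 0 by omega, h4]
        simp

lemma relW_length (v y z : KGen) : (relW v y z).length = 5151 := by
  simp [relW, uWord_eq_pump, pump_length, PL100]

lemma relW_get (v y z : KGen) {m : ℕ} (hm : m < 5151) :
    (relW v y z)[m]? = some (codeL v y z (dpat m)) := by
  rcases eq_or_ne m 5150 with rfl | hne
  · unfold relW
    rw [List.getElem?_append_right (by rw [uWord_eq_pump, pump_length, PL100])]
    rw [uWord_eq_pump, pump_length, PL100, dpat_5150]
    rfl
  · have hm' : m < PL 100 := by rw [PL100]; omega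
    unfold relW
    rw [List.getElem?_append, uWord_eq_pump, pump_length, if_pos hm']
    rw [pump_get v y 100 m hm']
    unfold dpat codeL
    rw [if_neg hne]
    by_cases hy : isY 100 m
    · rw [hy]
      simp
    · rw [Bool.not_eq_true] at hy
      rw [hy]
      simp

lemma relWW_get (v y z : KGen) {m : ℕ} (hm : m < 10302) :
    (relW v y z ++ relW v y z)[m]? = some (codeL v y z (DP m)) := by
  rcases Nat.lt_or_ge m 5151 with h | h
  · rw [List.getElem?_append, relW_length, if_pos h, relW_get v y z h]
    unfold DP
    rw [Nat.mod_eq_of_lt h]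
  · rw [List.getElem?_append, relW_length, if_neg (by omega),
      relW_get v y z (show m - 5151 < 5151 by omega)]
    unfold DP
    rw [show m % 5151 = m - 5151 by omega]

/-- Side conditions satisfied by the parameters of every relator word. -/
def GoodRel (v y z : KGen) : Prop :=
  (∃ n τ, v = KGen.vert n τ) ∧ (y = KGen.a ∨ ∃ i, y = KGen.b i) ∧
    (∃ n τ, z = KGen.vert n τ) ∧ v ≠ z

/-- Classifier of letters: it recovers the pattern value from the letter, uniformly in the
parameters of the relator. -/
def cls : KGen × Bool → ℕ
  | (KGen.vert _ _, true) => 0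
  | (KGen.a, true) => 1
  | (KGen.b _, true) => 1
  | (KGen.vert _ _, false) => 2
  | (KGen.a, false) => 3
  | (KGen.b _, false) => 3

lemma cls_codeL {v y z : KGen} (h : GoodRel v y z) {d : ℕ} (hd : d ≤ 2) :
    cls (codeL v y z d) = d := by
  obtain ⟨⟨n, τ, rfl⟩, hy, ⟨n', τ', rfl⟩, -⟩ := h
  interval_cases d <;> rcases hy with rfl | ⟨i, rfl⟩ <;> simp [codeL, cls]

/-! ### Occurrences in doubled relator words -/

/-- `p` occurs at position `t` in the doubled word `X ++ X`. -/
def Occ (X : Word KGen) (t : ℕ) (p : Word KGen) : Prop :=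
  ∀ i, i < p.length → p[i]? = (X ++ X)[t + i]?

lemma main_pos {v₁ y₁ z₁ v₂ y₂ z₂ : KGen} (g₁ : GoodRel v₁ y₁ z₁) (g₂ : GoodRel v₂ y₂ z₂)
    {p : Word KGen} (hp : 516 ≤ p.length) {t₁ t₂ : ℕ}
    (hb₁ : t₁ + p.length ≤ 10302) (hb₂ : t₂ + p.length ≤ 10302)
    (o₁ : Occ (relW v₁ y₁ z₁) t₁ p) (o₂ : Occ (relW v₂ y₂ z₂) t₂ p) :
    v₁ = v₂ ∧ y₁ = y₂ ∧ t₁ % 5151 = t₂ % 5151 := by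
  have key : ∀ i, i < p.length →
      codeL v₁ y₁ z₁ (DP (t₁ + i)) = codeL v₂ y₂ z₂ (DP (t₂ + i)) := by
    intro i hi
    have e1 := o₁ i hi
    have e2 := o₂ i hi
    rw [relWW_get _ _ _ (by omega)] at e1
    rw [relWW_get _ _ _ (by omega)] at e2
    exact Option.some.inj (e1.symm.trans e2)
  have eqDP : ∀ i, i < p.length → DP (t₁ + i) = DP (t₂ + i) := by
    intro i hi
    have h := congrArg cls (key i hi)
    rwa [cls_codeL g₁ (DP_le _), cls_codeL g₂ (DP_le _)] at h
  -- recover the main letter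
  obtain ⟨i0, hi0, hz0⟩ := next_zero t₁
  have hi0p : i0 < p.length := by omega
  have hv : v₁ = v₂ := by
    have hk := key i0 hi0p
    have h2 : DP (t₂ + i0) = 0 := by rw [← eqDP i0 hi0p]; exact hz0
    rw [hz0, h2] at hk
    simpa [codeL] using hk
  -- locate the first full gap
  obtain ⟨a, ha100, haNZ⟩ := next_nonzero t₁
  have hexA : ∃ i, DP (t₁ + i) ≠ 0 := ⟨a, haNZ⟩
  have hA := Nat.find_spec hexA
  have hA100 : Nat.find hexA ≤ 100 := le_trans (Nat.find_min' hexA haNZ) ha100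
  set A := Nat.find hexA with hAdef
  obtain ⟨b, hb100, hbNZ⟩ := next_nonzero (t₁ + A + 1)
  have hexB : ∃ i, DP (t₁ + A + 1 + i) ≠ 0 := ⟨b, hbNZ⟩
  have hG := Nat.find_spec hexB
  have hG100 : Nat.find hexB ≤ 100 := le_trans (Nat.find_min' hexB hbNZ) hb100
  set G := Nat.find hexB with hGdef
  have hGzero : ∀ j, j < G → DP (t₁ + A + 1 + j) = 0 := by
    intro j hj
    have := Nat.find_min hexB hj
    simpa using this
  have sig₁ : Sig (t₁ + A) G := by
    refine ⟨hA, ?_, ?_⟩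
    · rw [show t₁ + A + G + 1 = t₁ + A + 1 + G by omega]; exact hG
    · intro j h1 h2
      have := hGzero (j-1) (by omega)
      rwa [show t₁ + A + 1 + (j-1) = t₁ + A + j by omega] at this
  have sig₂ : Sig (t₂ + A) G := by
    refine ⟨?_, ?_, ?_⟩
    · have := eqDP A (by omega)
      rw [this] at hA
      exact hA
    · have := eqDP (A + G + 1) (by omega)
      rw [show t₁ + (A + G + 1) = t₁ + A + 1 + G by omega,
        show t₂ + (A + G + 1) = t₂ + A + G + 1 by omega] at this
      rw [← this]
      exact hG
    · intro j h1 h2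
      have he := eqDP (A + j) (by omega)
      have := hGzero (j-1) (by omega)
      rw [show t₁ + A + 1 + (j-1) = t₁ + (A + j) by omega] at this
      rw [he] at this
      rwa [show t₂ + (A + j) = t₂ + A + j by omega] at this
  have e1 := sig_tgt (show G ≤ 515 by omega) sig₁
  have e2 := sig_tgt (show G ≤ 515 by omega) sig₂
  have hmod : t₁ % 5151 = t₂ % 5151 := by omega
  -- recover the `y` letter: among three nonzero pattern positions at most one is a `2`
  obtain ⟨c, hc100, hcNZ⟩ := next_nonzero (t₁ + A + G + 2)
  have hone : ∃ i, i < p.length ∧ DP (t₁ + i) = 1 := by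
    have val : ∀ m, DP m ≠ 0 → DP m = 1 ∨ DP m = 2 := by
      intro m h
      have := DP_le m
      omega
    have two5150 : ∀ m, DP m = 2 → m % 5151 = 5150 := fun m h => dpat_eq_two h
    rcases val _ hA with h | h
    · exact ⟨A, by omega, h⟩
    rcases val _ hG with h' | h'
    · exact ⟨A + 1 + G, by omega, by
        rw [show t₁ + (A + 1 + G) = t₁ + A + 1 + G by omega]; exact h'⟩
    rcases val _ hcNZ with h'' | h''
    · exact ⟨A + G + 2 + c, by omega, by
        rw [show t₁ + (A + G + 2 + c) = t₁ + A + G + 2 + c by omega]; exact h''⟩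
    · exfalso
      have m1 := two5150 _ h
      have m2 := two5150 _ h'
      omega
  obtain ⟨i1, hi1, h1one⟩ := hone
  have hy : y₁ = y₂ := by
    have hk := key i1 hi1
    have h2 : DP (t₂ + i1) = 1 := by rw [← eqDP i1 hi1]; exact h1one
    rw [h1one, h2] at hk
    simpa [codeL] using hk
  exact ⟨hv, hy, hmod⟩

/-! ### Recovering relator parameters -/

lemma relW_inj {v y z v' y' z' : KGen} (h : relW v y z = relW v' y' z') :
    v = v' ∧ y = y' ∧ z = z' := by
  have e0 : (relW v y z)[0]? = (relW v' y' z')[0]? := by rw [h]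
  have e1 : (relW v y z)[1]? = (relW v' y' z')[1]? := by rw [h]
  have e2 : (relW v y z)[5150]? = (relW v' y' z')[5150]? := by rw [h]
  rw [relW_get v y z (by omega), relW_get v' y' z' (by omega), dpat_0] at e0
  rw [relW_get v y z (by omega), relW_get v' y' z' (by omega), dpat_1] at e1
  rw [relW_get v y z (by omega), relW_get v' y' z' (by omega), dpat_5150] at e2
  simp [codeL] at e0 e1 e2
  exact ⟨e0, e1, e2⟩

lemma good_of_mem {X : Word KGen} (h : X ∈ KRelWords) :
    ∃ v y z, GoodRel v y z ∧ X = relW v y z := by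
  rcases h with ⟨n, τ, he⟩ | ⟨n, τ, i, he⟩
  · refine ⟨KGen.vert n τ, KGen.a, KGen.vert (parent n τ).1 (parent n τ).2,
      ⟨⟨n, τ, rfl⟩, Or.inl rfl, ⟨_, _, rfl⟩, ?_⟩, he⟩
    cases τ with
    | nil =>
      intro hc
      rw [show parent n [] = (n+1, []) from rfl] at hc
      injection hc with h1 h2
      omega
    | cons hd tl =>
      intro hc
      rw [show parent n (hd :: tl) = (n, (hd :: tl).dropLast) from rfl] at hc
      injection hc with h1 h2
      have := congrArg List.length h2
      simp [List.length_dropLast] at this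
  · refine ⟨KGen.vert n τ, KGen.b i, KGen.vert n (τ ++ [i]),
      ⟨⟨n, τ, rfl⟩, Or.inr ⟨i, rfl⟩, ⟨_, _, rfl⟩, ?_⟩, he⟩
    intro hc
    injection hc with h1 h2
    have := congrArg List.length h2
    simp at this

lemma z_det {v y z z' : KGen} (h1 : relW v y z ∈ KRelWords) (h2 : relW v y z' ∈ KRelWords) :
    z = z' := by
  rcases h1 with ⟨n, τ, he⟩ | ⟨n, τ, i, he⟩ <;>
    rcases h2 with ⟨n', τ', he'⟩ | ⟨n', τ', i', he'⟩
  · obtain ⟨hv, hy, hz⟩ := relW_inj he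
    obtain ⟨hv', hy', hz'⟩ := relW_inj he'
    have hvv : KGen.vert n τ = KGen.vert n' τ' := hv.symm.trans hv'
    injection hvv with e1 e2
    subst e1; subst e2
    exact hz.trans hz'.symm
  · obtain ⟨hv, hy, hz⟩ := relW_inj he
    obtain ⟨hv', hy', hz'⟩ := relW_inj he'
    exact absurd (hy.symm.trans hy') (by simp)
  · obtain ⟨hv, hy, hz⟩ := relW_inj he
    obtain ⟨hv', hy', hz'⟩ := relW_inj he'
    exact absurd (hy.symm.trans hy') (by simp)
  · obtain ⟨hv, hy, hz⟩ := relW_inj he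
    obtain ⟨hv', hy', hz'⟩ := relW_inj he'
    have hvv : KGen.vert n τ = KGen.vert n' τ' := hv.symm.trans hv'
    have hyy : KGen.b i = KGen.b i' := hy.symm.trans hy'
    injection hvv with e1 e2
    injection hyy with e3
    subst e1; subst e2; subst e3
    exact hz.trans hz'.symm

/-! ### `wordInv` and cyclic permutations -/

lemma wordInv_append (a b : Word KGen) : wordInv (a ++ b) = wordInv b ++ wordInv a := by
  simp [wordInv]

lemma wordInv_length (a : Word KGen) : (wordInv a).length = a.length := by
  simp [wordInv]

lemma wordInv_wordInv (a : Word KGen) : wordInv (wordInv a) = a := by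
  have hmap : ∀ l : Word KGen,
      l.map ((fun p : KGen × Bool => (p.1, !p.2)) ∘ fun p : KGen × Bool => (p.1, !p.2)) = l := by
    intro l
    induction l with
    | nil => rfl
    | cons h t ih => simp [ih]
  simp [wordInv, List.map_reverse, List.map_map, hmap]

lemma cyclicPerm_length {w X : Word KGen} (h : IsCyclicPermOf w X) : w.length = X.length := by
  obtain ⟨x, y, rfl, rfl⟩ := h
  simp
  omega

lemma cyclicPerm_wordInv {w X : Word KGen} (h : IsCyclicPermOf w (wordInv X)) :
    IsCyclicPermOf (wordInv w) X := by
  obtain ⟨x, y, hX, rfl⟩ := h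
  refine ⟨wordInv y, wordInv x, ?_, wordInv_append _ _⟩
  rw [← wordInv_wordInv X, hX, wordInv_append]

lemma prefix_wordInv {p w : Word KGen} (h : p <+: w) : wordInv p <:+ wordInv w := by
  obtain ⟨t, rfl⟩ := h
  exact ⟨wordInv t, (wordInv_append _ _).symm⟩

/-- A representation of a cyclic permutation of `X` inside `X ++ X`. -/
lemma perm_rep {w X : Word KGen} (hX : X.length = 5151) (h : IsCyclicPermOf w X) :
    ∃ s, s < 5151 ∧ w = ((X ++ X).drop s).take 5151 ∧
      ∀ i, i < 5151 → w[i]? = (X ++ X)[s + i]? := by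
  obtain ⟨x, yy, hXe, hwe⟩ := h
  have hlen : x.length + yy.length = 5151 := by
    rw [← List.length_append, ← hXe, hX]
  by_cases hxl : x.length < 5151
  · refine ⟨x.length, hxl, ?_, ?_⟩
    · have hdrop : (X ++ X).drop x.length = (yy ++ x) ++ yy := by
        conv_lhs => rw [hXe]
        rw [List.append_assoc, List.drop_left, List.append_assoc]
      rw [hdrop, hwe, List.take_left' (by rw [hwe] at *; simp; omega)]
    · intro i hi
      have hdrop : (X ++ X).drop x.length = (yy ++ x) ++ yy := by
        conv_lhs => rw [hXe]
        rw [List.append_assoc, List.drop_left, List.append_assoc]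
      have h1 : (X ++ X)[x.length + i]? = ((X ++ X).drop x.length)[i]? :=
        List.getElem?_drop.symm
      rw [h1, hdrop, List.getElem?_append, if_pos (by simp; omega), hwe]
  · have hx5151 : x.length = 5151 := by omega
    have hyy : yy = [] := by
      have : yy.length = 0 := by omega
      exact List.eq_nil_of_length_eq_zero this
    subst hyy
    rw [List.append_nil] at hXe
    rw [List.nil_append] at hwe
    subst hXe; subst hwe
    refine ⟨0, by omega, ?_, ?_⟩
    · rw [List.drop_zero, List.take_left' hX]
    · intro i hi
      rw [Nat.zero_add, List.getElem?_append, if_pos (by omega)]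

lemma occ_of_prefix {w X p : Word KGen} {s : ℕ}
    (hget : ∀ i, i < 5151 → w[i]? = (X ++ X)[s + i]?) (hwl : w.length = 5151)
    (hp : p <+: w) : Occ X s p := by
  intro i hi
  obtain ⟨t, rfl⟩ := hp
  have hlen : p.length ≤ 5151 := by
    rw [← hwl]; simp
  rw [← hget i (by omega), List.getElem?_append, if_pos hi]

lemma occ_of_suffix {w X p : Word KGen} {s : ℕ}
    (hget : ∀ i, i < 5151 → w[i]? = (X ++ X)[s + i]?) (hwl : w.length = 5151)
    (hp : p <:+ w) : Occ X (s + (5151 - p.length)) p := by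
  intro i hi
  obtain ⟨u, rfl⟩ := hp
  have hul : u.length = 5151 - p.length := by
    have := hwl; simp at this; omega
  have h1 : (u ++ p)[u.length + i]? = p[i]? := by
    rw [List.getElem?_append_right (by omega)]
    congr 1
    omega
  rw [← h1, hget (u.length + i) (by have := hwl; simp at this; omega)]
  congr 1
  omega

/-! ### Counting argument ruling out mixed (positive/inverse) overlaps -/

lemma occ_sublist {X p : Word KGen} {t : ℕ} (hb : t + p.length ≤ (X ++ X).length)
    (o : Occ X t p) : p.Sublist (X ++ X) := by
  have hpe : p = ((X ++ X).drop t).take p.length := by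
    apply List.ext_getElem?
    intro i
    rcases Nat.lt_or_ge i p.length with hi | hi
    · rw [List.getElem?_take, if_pos hi, List.getElem?_drop]
      exact o i hi
    · rw [List.getElem?_eq_none hi, List.getElem?_take, if_neg (by omega)]
  rw [hpe]
  exact (List.take_sublist _ _).trans (List.drop_sublist _ _)

lemma mem_uWord {v y : KGen} {x : KGen × Bool} (hx : x ∈ uWord v y) :
    x = (v, true) ∨ x = (y, true) := by
  simp only [uWord, List.mem_flatMap, List.mem_range, List.mem_append, List.mem_replicate,
    List.mem_singleton] at hx
  obtain ⟨k, -, h | h⟩ := hx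
  · exact Or.inl h.2
  · exact Or.inr h

lemma count_false_relW (v y z : KGen) : (relW v y z).countP (fun a => !a.2) = 1 := by
  unfold relW
  rw [List.countP_append]
  have h1 : (uWord v y).countP (fun a => !a.2) = 0 := by
    rw [List.countP_eq_zero]
    intro a ha
    rcases mem_uWord ha with rfl | rfl <;> simp
  rw [h1]
  rfl

lemma count_true_wordInv_relW (v y z : KGen) :
    (wordInv (relW v y z)).countP (fun a => a.2) = 1 := by
  unfold wordInv
  rw [List.countP_reverse, List.countP_map]
  have he : ((fun a : KGen × Bool => a.2) ∘ fun p : KGen × Bool => (p.1, !p.2))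
      = fun a : KGen × Bool => !a.2 := rfl
  rw [he, count_false_relW]

lemma countP_bool_split (l : Word KGen) :
    l.countP (fun a => a.2) + l.countP (fun a => !a.2) = l.length := by
  induction l with
  | nil => rfl
  | cons a t ih =>
    rw [List.countP_cons, List.countP_cons, List.length_cons]
    cases h : a.2 <;> simp [h] <;> omega

lemma mixed {v₁ y₁ z₁ v₂ y₂ z₂ : KGen} {p : Word KGen} {t₁ t₂ : ℕ}
    (hp : 516 ≤ p.length)
    (hb₁ : t₁ + p.length ≤ 10302) (hb₂ : t₂ + p.length ≤ 10302)
    (o₁ : Occ (relW v₁ y₁ z₁) t₁ p) (o₂ : Occ (wordInv (relW v₂ y₂ z₂)) t₂ p) : False := by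
  have l1 : (relW v₁ y₁ z₁ ++ relW v₁ y₁ z₁).length = 10302 := by
    simp [relW_length]
  have l2 : (wordInv (relW v₂ y₂ z₂) ++ wordInv (relW v₂ y₂ z₂)).length = 10302 := by
    simp [wordInv_length, relW_length]
  have c1 : p.countP (fun a => !a.2) ≤ 2 := by
    have : p.countP (fun a => !a.2) ≤ _ := (occ_sublist (by omega) o₁).countP_le
    rwa [List.countP_append, count_false_relW] at this
  have c2 : p.countP (fun a => a.2) ≤ 2 := by
    have : p.countP (fun a => a.2) ≤ _ := (occ_sublist (by omega) o₂).countP_le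
    rwa [List.countP_append, count_true_wordInv_relW] at this
  have := countP_bool_split p
  omega

/-! ### Relator words are cyclically reduced -/

lemma reduce_chain' {l : Word KGen}
    (h : l.Chain' fun a b => ¬(a.1 = b.1 ∧ a.2 = !b.2)) : FreeGroup.reduce l = l := by
  induction l with
  | nil => rfl
  | cons a l ih =>
    cases l with
    | nil => rfl
    | cons b t =>
      have hab := (List.isChain_cons_cons.mp h).1
      have h2 := (List.isChain_cons_cons.mp h).2
      rw [FreeGroup.reduce.cons, ih h2]
      show (if a.1 = b.1 ∧ a.2 = !b.2 then t else a :: b :: t) = a :: b :: t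
      rw [if_neg hab]

lemma mem_relW {v y z : KGen} {x : KGen × Bool} (hx : x ∈ relW v y z) :
    x = (v, true) ∨ x = (y, true) ∨ x = (z, false) := by
  unfold relW at hx
  rw [List.mem_append, List.mem_singleton] at hx
  rcases hx with hx | hx
  · rcases mem_uWord hx with h | h
    · exact Or.inl h
    · exact Or.inr (Or.inl h)
  · exact Or.inr (Or.inr hx)

lemma reduce_relW {v y z : KGen} (hg : GoodRel v y z) :
    FreeGroup.reduce (relW v y z) = relW v y z := by
  apply reduce_chain'
  apply List.Pairwise.isChain
  apply List.pairwise_of_forall_mem_list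
  intro p hp q hq hcon
  obtain ⟨hpq1, hpq2⟩ := hcon
  obtain ⟨⟨n, τ, rfl⟩, hy, ⟨n', τ', rfl⟩, hvz⟩ := hg
  rcases mem_relW hp with rfl | rfl | rfl <;> rcases mem_relW hq with rfl | rfl | rfl <;>
    rcases hy with rfl | ⟨i, rfl⟩ <;> simp_all

/-! ### Characterization of the symmetrized closure -/

lemma symm_char {r : Word KGen} (hr : r ∈ symmClosure KRelWords) :
    ∃ v y z, GoodRel v y z ∧ relW v y z ∈ KRelWords ∧
      (IsCyclicPermOf r (relW v y z) ∨ IsCyclicPermOf r (wordInv (relW v y z))) := by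
  obtain ⟨R, hR, r', ⟨-, c, hc⟩, hperm⟩ := hr
  obtain ⟨v, y, z, hg, rfl⟩ := good_of_mem hR
  rw [reduce_relW hg] at hc
  have hcnil : c = [] := by
    rcases List.eq_nil_or_concat c with rfl | ⟨c', d, hcd⟩
    · rfl
    · exfalso
      rw [List.concat_eq_append] at hcd
      subst hcd
      have hfirst : (relW v y z)[0]? = some (d.1, !d.2) := by
        rw [hc, wordInv_append]
        have : wordInv [d] = [(d.1, !d.2)] := rfl
        rw [this]
        simp
      have hlast : (relW v y z).getLast? = some d := by
        rw [hc, ← List.append_assoc, List.getLast?_concat]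
      have hf2 : (relW v y z)[0]? = some (v, true) := by
        rw [relW_get v y z (by omega), dpat_0]
        rfl
      have hl2 : (relW v y z).getLast? = some (z, false) := by
        rw [List.getLast?_eq_getElem?, relW_length]
        rw [show (5151 : ℕ) - 1 = 5150 from rfl, relW_get v y z (by omega), dpat_5150]
        rfl
      have hd : d = (z, false) := by
        rw [hl2] at hlast
        exact (Option.some.inj hlast).symm
      rw [hf2] at hfirst
      rw [hd] at hfirst
      have := Option.some.inj hfirst
      have hvz := hg.2.2.2
      apply hvz
      have := congrArg Prod.fst this
      simpa using this
  subst hcnil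
  have hr' : r' = relW v y z := by
    have : wordInv ([] : Word KGen) = [] := rfl
    rw [this] at hc
    simpa using hc.symm
  subst hr'
  exact ⟨v, y, z, hg, hR, hperm⟩

end SmallCancelAux


open SmallCancelAux

/-- The presentation of `K` satisfies the `C'(1/10)` small cancellation condition: every piece
`p` which is an initial segment of a symmetrized relator `r` satisfies `|p| < |r|/10`. -/
theorem stmt11 (p r : Word KGen) (hp : IsPiece KRelWords p)
    (hr : r ∈ symmClosure KRelWords) (hpr : p <+: r) :
    10 * p.length < r.length := by
  classical
  obtain ⟨-, r₁, hr₁, r₂, hr₂, hne, hp₁, hp₂⟩ := hp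
  obtain ⟨v, y, z, hgr, -, hpermr⟩ := symm_char hr
  have hrlen : r.length = 5151 := by
    rcases hpermr with h | h
    · rw [cyclicPerm_length h, relW_length]
    · rw [cyclicPerm_length h, wordInv_length, relW_length]
  rw [hrlen]
  by_contra hcon
  push_neg at hcon
  have hplen : 516 ≤ p.length := by omega
  set q := p.take 516 with hqdef
  have hqlen : q.length = 516 := by
    rw [hqdef, List.length_take]
    omega
  have hq₁ : q <+: r₁ := (List.take_prefix 516 p).trans hp₁
  have hq₂ : q <+: r₂ := (List.take_prefix 516 p).trans hp₂
  obtain ⟨v₁, y₁, z₁, g₁, m₁, d₁⟩ := symm_char hr₁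
  obtain ⟨v₂, y₂, z₂, g₂, m₂, d₂⟩ := symm_char hr₂
  have hlen₁ : r₁.length = 5151 := by
    rcases d₁ with h | h
    · rw [cyclicPerm_length h, relW_length]
    · rw [cyclicPerm_length h, wordInv_length, relW_length]
  have hlen₂ : r₂.length = 5151 := by
    rcases d₂ with h | h
    · rw [cyclicPerm_length h, relW_length]
    · rw [cyclicPerm_length h, wordInv_length, relW_length]
  apply hne
  rcases d₁ with pos₁ | inv₁ <;> rcases d₂ with pos₂ | inv₂
  · -- positive / positive
    obtain ⟨s₁, hs₁, hrep₁, hget₁⟩ := perm_rep (relW_length _ _ _) pos₁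
    obtain ⟨s₂, hs₂, hrep₂, hget₂⟩ := perm_rep (relW_length _ _ _) pos₂
    have ho₁ : Occ (relW v₁ y₁ z₁) s₁ q := occ_of_prefix hget₁ hlen₁ hq₁
    have ho₂ : Occ (relW v₂ y₂ z₂) s₂ q := occ_of_prefix hget₂ hlen₂ hq₂
    obtain ⟨hv, hy, hmod⟩ := main_pos g₁ g₂ (by omega) (by omega) (by omega) ho₁ ho₂
    subst hv
    subst hy
    have hz : z₁ = z₂ := z_det m₁ m₂
    subst hz
    have hs : s₁ = s₂ := by omega
    rw [hrep₁, hrep₂, hs]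
  · -- positive / inverse
    obtain ⟨s₁, hs₁, hrep₁, hget₁⟩ := perm_rep (relW_length v₁ y₁ z₁) pos₁
    obtain ⟨s₂, hs₂, hrep₂, hget₂⟩ :=
      perm_rep (by rw [wordInv_length, relW_length]) inv₂
    have ho₁ : Occ (relW v₁ y₁ z₁) s₁ q := occ_of_prefix hget₁ hlen₁ hq₁
    have ho₂ : Occ (wordInv (relW v₂ y₂ z₂)) s₂ q := occ_of_prefix hget₂ hlen₂ hq₂
    exact (mixed (by omega) (by omega) (by omega) ho₁ ho₂).elim
  · -- inverse / positive
    obtain ⟨s₁, hs₁, hrep₁, hget₁⟩ :=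
      perm_rep (by rw [wordInv_length, relW_length]) inv₁
    obtain ⟨s₂, hs₂, hrep₂, hget₂⟩ := perm_rep (relW_length v₂ y₂ z₂) pos₂
    have ho₁ : Occ (wordInv (relW v₁ y₁ z₁)) s₁ q := occ_of_prefix hget₁ hlen₁ hq₁
    have ho₂ : Occ (relW v₂ y₂ z₂) s₂ q := occ_of_prefix hget₂ hlen₂ hq₂
    exact (mixed (by omega) (by omega) (by omega) ho₂ ho₁).elim
  · -- inverse / inverse
    have pi₁ : IsCyclicPermOf (wordInv r₁) (relW v₁ y₁ z₁) := cyclicPerm_wordInv inv₁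
    have pi₂ : IsCyclicPermOf (wordInv r₂) (relW v₂ y₂ z₂) := cyclicPerm_wordInv inv₂
    obtain ⟨s₁, hs₁, hrep₁, hget₁⟩ := perm_rep (relW_length _ _ _) pi₁
    obtain ⟨s₂, hs₂, hrep₂, hget₂⟩ := perm_rep (relW_length _ _ _) pi₂
    have hql' : (wordInv q).length = 516 := by rw [wordInv_length, hqlen]
    have hwl₁ : (wordInv r₁).length = 5151 := by rw [wordInv_length, hlen₁]
    have hwl₂ : (wordInv r₂).length = 5151 := by rw [wordInv_length, hlen₂]
    have ho₁ : Occ (relW v₁ y₁ z₁) (s₁ + (5151 - (wordInv q).length)) (wordInv q) :=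
      occ_of_suffix hget₁ hwl₁ (prefix_wordInv hq₁)
    have ho₂ : Occ (relW v₂ y₂ z₂) (s₂ + (5151 - (wordInv q).length)) (wordInv q) :=
      occ_of_suffix hget₂ hwl₂ (prefix_wordInv hq₂)
    obtain ⟨hv, hy, hmod⟩ := main_pos g₁ g₂ (by omega) (by omega) (by omega) ho₁ ho₂
    subst hv
    subst hy
    have hz : z₁ = z₂ := z_det m₁ m₂
    subst hz
    have hs : s₁ = s₂ := by omega
    have hww : wordInv r₁ = wordInv r₂ := by rw [hrep₁, hrep₂, hs]
    rw [← wordInv_wordInv r₁, ← wordInv_wordInv r₂, hww]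
end
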